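/- Product inequality for higher topological complexity: for path-connected spaces X_1 and X_2 with X_1^n × X_2^n normal, TC_n(X_1 × X_2) ≤ TC_n(X_1) + TC_n(X_2). -/

import Mathlib

open Set

/-- The `n`-th homotopic distance of maps `f 0, …, f (n-1) : X → Y`:
the least `k` admitting an open cover `U 0, …, U k` of `X` on each element of
which all the maps are pairwise homotopic; `∞` if no such cover exists. -/
noncomputable def homDist {X Y : Type*} [TopologicalSpace X] [TopologicalSpace Y]
    {n : ℕ} (f : Fin n → C(X, Y)) : ℕ∞ :=
  sInf ((fun k : ℕ => (k : ℕ∞)) '' {k | ∃ U : Fin (k + 1) → Set X,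
    (∀ j, IsOpen (U j)) ∧ (⋃ j, U j) = Set.univ ∧
    ∀ j i i', ((f i).restrict (U j)).Homotopic ((f i').restrict (U j))})

/-- Projection of `X^n` onto the `i`-th factor. -/
def prMap (X : Type*) [TopologicalSpace X] (n : ℕ) (i : Fin n) :
    C((Fin n → X), X) :=
  ⟨fun x => x i, continuous_apply i⟩

/-- The `n`-th topological complexity (as the homotopic distance of the `n`
coordinate projections) of a space. -/
noncomputable def tcomplexity (n : ℕ) (X : Type*) [TopologicalSpace X] : ℕ∞ :=
  homDist (prMap X n)

/-! ### Auxiliary definitions and lemmas -/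

/-- `f` admits a "homotopy cover" with `k+1` open sets. -/
def HasCover {X Y : Type*} [TopologicalSpace X] [TopologicalSpace Y] {n : ℕ}
    (f : Fin n → C(X, Y)) (k : ℕ) : Prop :=
  ∃ U : Fin (k + 1) → Set X, (∀ j, IsOpen (U j)) ∧ (⋃ j, U j) = Set.univ ∧
    ∀ j i i', ((f i).restrict (U j)).Homotopic ((f i').restrict (U j))

lemma HasCover.mono {X Y : Type*} [TopologicalSpace X] [TopologicalSpace Y] {n : ℕ}
    {f : Fin n → C(X, Y)} {k k' : ℕ} (h : HasCover f k') (hkk : k' ≤ k) :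
    HasCover f k := by
  obtain ⟨U, ho, hc, hh⟩ := h
  refine ⟨fun j => U ⟨min j.val k', by omega⟩, fun j => ho _, ?_, fun j i i' => hh _ i i'⟩
  rw [Set.eq_univ_iff_forall]
  intro x
  obtain ⟨j0, hj0⟩ := Set.mem_iUnion.1 (by rw [hc] ; exact Set.mem_univ x :
    x ∈ ⋃ j, U j)
  refine Set.mem_iUnion.2 ⟨⟨j0.val, by omega⟩, ?_⟩
  have hj : (⟨min j0.val k', by omega⟩ : Fin (k' + 1)) = j0 := by
    apply Fin.ext
    simp only
    omega
  simpa [hj] using hj0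

lemma homDist_le_iff {X Y : Type*} [TopologicalSpace X] [TopologicalSpace Y] {n : ℕ}
    (f : Fin n → C(X, Y)) (k : ℕ) : homDist f ≤ (k : ℕ∞) ↔ HasCover f k := by
  constructor
  · intro h
    by_contra hc
    have hlb : ((k + 1 : ℕ) : ℕ∞) ≤ homDist f := by
      apply le_sInf
      rintro b ⟨k', hk', rfl⟩
      have hgt : k < k' := by
        by_contra hle
        exact hc (HasCover.mono hk' (by omega))
      show ((k + 1 : ℕ) : ℕ∞) ≤ ((k' : ℕ) : ℕ∞)
      exact_mod_cast Nat.succ_le_of_lt hgt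
    have h2 := hlb.trans h
    have : k + 1 ≤ k := by exact_mod_cast h2
    omega
  · intro h
    exact sInf_le ⟨k, h, rfl⟩

/-- Gluing homotopies over a disjoint family of open sets. -/
lemma homotopic_restrict_iUnion {Z Y : Type*} [TopologicalSpace Z] [TopologicalSpace Y]
    {ι : Type*} (S : ι → Set Z) (hop : ∀ t, IsOpen (S t))
    (hdisj : ∀ t t', t ≠ t' → Disjoint (S t) (S t'))
    (f g : C(Z, Y)) (h : ∀ t, (f.restrict (S t)).Homotopic (g.restrict (S t))) :
    (f.restrict (⋃ t, S t)).Homotopic (g.restrict (⋃ t, S t)) := by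
  classical
  set W := ⋃ t, S t with hW
  let H : ∀ t, ContinuousMap.Homotopy (f.restrict (S t)) (g.restrict (S t)) :=
    fun t => (h t).some
  let T : ι → Set (unitInterval × ↥W) := fun t => {q | (q.2 : Z) ∈ S t}
  have hTopen : ∀ t, IsOpen (T t) :=
    fun t => (hop t).preimage (continuous_subtype_val.comp continuous_snd)
  let ψ : ∀ t, C(↥(T t), unitInterval × ↥(S t)) := fun t =>
    ⟨fun q => ((q : unitInterval × ↥W).1, ⟨((q : unitInterval × ↥W).2 : Z), q.2⟩), by
      apply Continuous.prodMk
      · exact continuous_fst.comp continuous_subtype_val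
      · exact Continuous.subtype_mk
          (continuous_subtype_val.comp (continuous_snd.comp continuous_subtype_val)) _⟩
  let φ : ∀ t, C(↥(T t), Y) := fun t => (H t).toContinuousMap.comp (ψ t)
  have hφ : ∀ t t' (x : unitInterval × ↥W) (hxi : x ∈ T t) (hxj : x ∈ T t'),
      φ t ⟨x, hxi⟩ = φ t' ⟨x, hxj⟩ := by
    intro t t' x hxi hxj
    obtain rfl : t = t' := by
      by_contra hne
      exact Set.disjoint_left.1 (hdisj t t' hne) hxi hxj
    rfl
  have hS : ∀ x : unitInterval × ↥W, ∃ t, T t ∈ nhds x := by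
    intro x
    obtain ⟨t, ht⟩ := Set.mem_iUnion.1 x.2.2
    exact ⟨t, (hTopen t).mem_nhds ht⟩
  refine ⟨⟨ContinuousMap.liftCover T φ hφ hS, ?_, ?_⟩⟩
  · intro x
    obtain ⟨t, ht⟩ := Set.mem_iUnion.1 x.2
    have hx : ((0 : unitInterval), x) ∈ T t := ht
    have := ContinuousMap.liftCover_coe (S := T) (φ := φ) (hφ := hφ) (hS := hS)
      (⟨((0 : unitInterval), x), hx⟩ : ↥(T t))
    rw [show ((⟨((0 : unitInterval), x), hx⟩ : ↥(T t)) : unitInterval × ↥W)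
      = ((0 : unitInterval), x) from rfl] at this
    show (ContinuousMap.liftCover T φ hφ hS) ((0 : unitInterval), x) = (f.restrict W) x
    rw [this]
    show (H t) ((0 : unitInterval), ⟨(x : Z), ht⟩) = (f.restrict W) x
    rw [(H t).apply_zero]
    rfl
  · intro x
    obtain ⟨t, ht⟩ := Set.mem_iUnion.1 x.2
    have hx : ((1 : unitInterval), x) ∈ T t := ht
    have := ContinuousMap.liftCover_coe (S := T) (φ := φ) (hφ := hφ) (hS := hS)
      (⟨((1 : unitInterval), x), hx⟩ : ↥(T t))
    rw [show ((⟨((1 : unitInterval), x), hx⟩ : ↥(T t)) : unitInterval × ↥W)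
      = ((1 : unitInterval), x) from rfl] at this
    show (ContinuousMap.liftCover T φ hφ hS) ((1 : unitInterval), x) = (g.restrict W) x
    rw [this]
    show (H t) ((1 : unitInterval), ⟨(x : Z), ht⟩) = (g.restrict W) x
    rw [(H t).apply_one]
    rfl

/-- Homotopy between restrictions of product projections on a box-like subset. -/
lemma piece_homotopic {X₁ X₂ : Type*} [TopologicalSpace X₁] [TopologicalSpace X₂] {n : ℕ}
    (a a' : Fin n) {U : Set (Fin n → X₁)} {V : Set (Fin n → X₂)}
    (h₁ : ((prMap X₁ n a).restrict U).Homotopic ((prMap X₁ n a').restrict U))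
    (h₂ : ((prMap X₂ n a).restrict V).Homotopic ((prMap X₂ n a').restrict V))
    {Ω : Set (Fin n → X₁ × X₂)}
    (hΩ₁ : ∀ x ∈ Ω, (fun i => (x i).1) ∈ U) (hΩ₂ : ∀ x ∈ Ω, (fun i => (x i).2) ∈ V) :
    ((prMap (X₁ × X₂) n a).restrict Ω).Homotopic ((prMap (X₁ × X₂) n a').restrict Ω) := by
  let c₁ : C(↥Ω, ↥U) := ⟨fun z => ⟨fun i => ((z : Fin n → X₁ × X₂) i).1, hΩ₁ z.val z.2⟩, by
    apply Continuous.subtype_mk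
    exact continuous_pi fun i => continuous_fst.comp ((continuous_apply i).comp
      continuous_subtype_val)⟩
  let c₂ : C(↥Ω, ↥V) := ⟨fun z => ⟨fun i => ((z : Fin n → X₁ × X₂) i).2, hΩ₂ z.val z.2⟩, by
    apply Continuous.subtype_mk
    exact continuous_pi fun i => continuous_snd.comp ((continuous_apply i).comp
      continuous_subtype_val)⟩
  have e : ∀ b : Fin n, (prMap (X₁ × X₂) n b).restrict Ω =
      (((prMap X₁ n b).restrict U).comp c₁).prodMk (((prMap X₂ n b).restrict V).comp c₂) := by
    intro b
    ext z <;> rfl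
  rw [e a, e a']
  obtain ⟨F⟩ := ContinuousMap.Homotopic.comp h₁ (ContinuousMap.Homotopic.refl c₁)
  obtain ⟨G⟩ := ContinuousMap.Homotopic.comp h₂ (ContinuousMap.Homotopic.refl c₂)
  exact ⟨F.prodMk G⟩

/-- The splitting homeomorphism `(X₁ × X₂)ⁿ ≃ₜ X₁ⁿ × X₂ⁿ`. -/
def splitHomeo (X₁ X₂ : Type*) [TopologicalSpace X₁] [TopologicalSpace X₂] (n : ℕ) :
    (Fin n → X₁ × X₂) ≃ₜ (Fin n → X₁) × (Fin n → X₂) where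
  toFun x := (fun i => (x i).1, fun i => (x i).2)
  invFun p i := (p.1 i, p.2 i)
  left_inv x := rfl
  right_inv p := rfl
  continuous_toFun := by
    apply Continuous.prodMk
    · exact continuous_pi fun i => continuous_fst.comp (continuous_apply i)
    · exact continuous_pi fun i => continuous_snd.comp (continuous_apply i)
  continuous_invFun := by
    exact continuous_pi fun i => Continuous.prodMk
      ((continuous_apply i).comp continuous_fst) ((continuous_apply i).comp continuous_snd)

/-- The key construction: combining covers of `X₁ⁿ` and `X₂ⁿ` into a cover of `(X₁ × X₂)ⁿ`. -/
lemma hasCover_prod {X₁ X₂ : Type*} [TopologicalSpace X₁] [TopologicalSpace X₂] {n k l : ℕ}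
    [NormalSpace (Fin n → X₁ × X₂)]
    (h₁ : HasCover (prMap X₁ n) k) (h₂ : HasCover (prMap X₂ n) l) :
    HasCover (prMap (X₁ × X₂) n) (k + l) := by
  classical
  obtain ⟨U, hUo, hUc, hUh⟩ := h₁
  obtain ⟨V, hVo, hVc, hVh⟩ := h₂
  let π₁ : C(Fin n → X₁ × X₂, Fin n → X₁) :=
    ⟨fun x i => (x i).1, continuous_pi fun i => continuous_fst.comp (continuous_apply i)⟩
  let π₂ : C(Fin n → X₁ × X₂, Fin n → X₂) :=
    ⟨fun x i => (x i).2, continuous_pi fun i => continuous_snd.comp (continuous_apply i)⟩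
  obtain ⟨F₀, hF₀⟩ := BumpCovering.exists_isSubordinate_of_locallyFinite isClosed_univ
    (fun i : Fin (k + 1) => π₁ ⁻¹' (U i)) (fun i => (hUo i).preimage π₁.continuous)
    (locallyFinite_of_finite _)
    (by rw [← Set.preimage_iUnion, hUc, Set.preimage_univ])
  obtain ⟨G₀, hG₀⟩ := BumpCovering.exists_isSubordinate_of_locallyFinite isClosed_univ
    (fun j : Fin (l + 1) => π₂ ⁻¹' (V j)) (fun j => (hVo j).preimage π₂.continuous)
    (locallyFinite_of_finite _)
    (by rw [← Set.preimage_iUnion, hVc, Set.preimage_univ])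
  let f := F₀.toPartitionOfUnity
  let g := G₀.toPartitionOfUnity
  have hfsub : ∀ i, tsupport (f i) ⊆ π₁ ⁻¹' (U i) := hF₀.toPartitionOfUnity
  have hgsub : ∀ j, tsupport (g j) ⊆ π₂ ⁻¹' (V j) := hG₀.toPartitionOfUnity
  let f' : ℕ → (Fin n → X₁ × X₂) → ℝ := fun r => if h : r < k + 1 then f ⟨r, h⟩ else 0
  let g' : ℕ → (Fin n → X₁ × X₂) → ℝ := fun r => if h : r < l + 1 then g ⟨r, h⟩ else 0
  let FS : ℕ → (Fin n → X₁ × X₂) → ℝ := fun m x => ∑ r ∈ Finset.range m, f' r x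
  let GS : ℕ → (Fin n → X₁ × X₂) → ℝ := fun m x => ∑ r ∈ Finset.range m, g' r x
  have hf'c : ∀ r, Continuous (f' r) := by
    intro r
    simp only [f']
    split_ifs with h
    · exact (f ⟨r, h⟩).continuous
    · exact continuous_const
  have hg'c : ∀ r, Continuous (g' r) := by
    intro r
    simp only [g']
    split_ifs with h
    · exact (g ⟨r, h⟩).continuous
    · exact continuous_const
  have hFSc : ∀ m, Continuous (FS m) :=
    fun m => continuous_finset_sum _ fun r _ => hf'c r
  have hGSc : ∀ m, Continuous (GS m) :=
    fun m => continuous_finset_sum _ fun r _ => hg'c r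
  have hf'nn : ∀ r x, 0 ≤ f' r x := by
    intro r x
    simp only [f']
    split_ifs with h
    · exact f.nonneg _ x
    · exact le_refl 0
  have hg'nn : ∀ r x, 0 ≤ g' r x := by
    intro r x
    simp only [g']
    split_ifs with h
    · exact g.nonneg _ x
    · exact le_refl 0
  have hFSmono : ∀ {m m' : ℕ}, m ≤ m' → ∀ x, FS m x ≤ FS m' x := by
    intro m m' hmm x
    exact Finset.sum_le_sum_of_subset_of_nonneg (Finset.range_subset_range.2 hmm)
      (fun r _ _ => hf'nn r x)
  have hGSmono : ∀ {m m' : ℕ}, m ≤ m' → ∀ x, GS m x ≤ GS m' x := by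
    intro m m' hmm x
    exact Finset.sum_le_sum_of_subset_of_nonneg (Finset.range_subset_range.2 hmm)
      (fun r _ _ => hg'nn r x)
  have hFStop : ∀ x, FS (k + 1) x = 1 := by
    intro x
    have h1 : ∑ᶠ i, f i x = 1 := f.sum_eq_one (Set.mem_univ x)
    rw [finsum_eq_sum_of_fintype] at h1
    calc FS (k + 1) x = ∑ i : Fin (k + 1), f' i.val x :=
          (Fin.sum_univ_eq_sum_range (fun r => f' r x) (k + 1)).symm
      _ = ∑ i : Fin (k + 1), f i x := by
          apply Finset.sum_congr rfl
          intro i _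
          simp only [f', dif_pos i.isLt]
      _ = 1 := h1
  have hGStop : ∀ x, GS (l + 1) x = 1 := by
    intro x
    have h1 : ∑ᶠ j, g j x = 1 := g.sum_eq_one (Set.mem_univ x)
    rw [finsum_eq_sum_of_fintype] at h1
    calc GS (l + 1) x = ∑ j : Fin (l + 1), g' j.val x :=
          (Fin.sum_univ_eq_sum_range (fun r => g' r x) (l + 1)).symm
      _ = ∑ j : Fin (l + 1), g j x := by
          apply Finset.sum_congr rfl
          intro j _
          simp only [g', dif_pos j.isLt]
      _ = 1 := h1
  -- The pieces
  let Ω : ℕ → ℕ → Set (Fin n → X₁ × X₂) := fun i j =>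
    {x | max (FS i x) (GS j x) < min (FS (i + 1) x) (GS (j + 1) x)}
  have hΩo : ∀ i j, IsOpen (Ω i j) := fun i j =>
    isOpen_lt ((hFSc i).max (hGSc j)) ((hFSc (i + 1)).min (hGSc (j + 1)))
  have hΩsub₁ : ∀ i j (hi : i < k + 1), ∀ x ∈ Ω i j, π₁ x ∈ U ⟨i, hi⟩ := by
    intro i j hi x hx
    have h1 : FS i x < FS (i + 1) x :=
      lt_of_le_of_lt (le_max_left _ _) (lt_of_lt_of_le hx (min_le_left _ _))
    have h2 : FS (i + 1) x = FS i x + f' i x := Finset.sum_range_succ _ _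
    have h3 : f ⟨i, hi⟩ x ≠ 0 := by
      intro h0
      have : f' i x = 0 := by simp only [f', dif_pos hi, h0]
      rw [h2, this, add_zero] at h1
      exact lt_irrefl _ h1
    exact hfsub ⟨i, hi⟩ (subset_closure h3)
  have hΩsub₂ : ∀ i j (hj : j < l + 1), ∀ x ∈ Ω i j, π₂ x ∈ V ⟨j, hj⟩ := by
    intro i j hj x hx
    have h1 : GS j x < GS (j + 1) x :=
      lt_of_le_of_lt (le_max_right _ _) (lt_of_lt_of_le hx (min_le_right _ _))
    have h2 : GS (j + 1) x = GS j x + g' j x := Finset.sum_range_succ _ _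
    have h3 : g ⟨j, hj⟩ x ≠ 0 := by
      intro h0
      have : g' j x = 0 := by simp only [g', dif_pos hj, h0]
      rw [h2, this, add_zero] at h1
      exact lt_irrefl _ h1
    exact hgsub ⟨j, hj⟩ (subset_closure h3)
  -- The diagonal unions
  refine ⟨fun m => ⋃ p : {p : ℕ × ℕ // p.1 ≤ k ∧ p.2 ≤ l ∧ p.1 + p.2 = m.val},
    Ω p.val.1 p.val.2, fun m => isOpen_iUnion fun p => hΩo _ _, ?_, ?_⟩
  · -- covering
    rw [Set.eq_univ_iff_forall]
    intro x
    have hfind : ∀ (FS : ℕ → (Fin n → X₁ × X₂) → ℝ) (k : ℕ),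
        FS 0 x = 0 → (∀ {m m' : ℕ}, m ≤ m' → ∀ y, FS m y ≤ FS m' y) →
        FS (k + 1) x = 1 →
        ∃ i ≤ k, FS i x < 1 ∧ FS (i + 1) x = 1 := by
      intro FS k h0 hmono htop
      let Pr : ℕ → Prop := fun i => FS i x < 1
      have hP0 : Pr 0 := by rw [show Pr 0 = (FS 0 x < 1) from rfl, h0] ; norm_num
      let i₀ := Nat.findGreatest Pr k
      have hi₀ : i₀ ≤ k := Nat.findGreatest_le k
      have hPi₀ : Pr i₀ := Nat.findGreatest_spec (Nat.zero_le k) hP0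
      refine ⟨i₀, hi₀, hPi₀, ?_⟩
      rcases eq_or_lt_of_le hi₀ with heq | hlt
      · rw [heq]
        exact htop
      · have hnP : ¬ Pr (i₀ + 1) :=
          Nat.findGreatest_is_greatest (Nat.lt_succ_self i₀) (by omega)
        have hge : 1 ≤ FS (i₀ + 1) x := not_lt.1 hnP
        have hle : FS (i₀ + 1) x ≤ 1 := by
          rw [← htop]
          exact hmono (by omega) x
        linarith
    have hFS0 : FS 0 x = 0 := by simp [FS]
    have hGS0 : GS 0 x = 0 := by simp [GS]
    obtain ⟨i₀, hi₀, hFi, hFi1⟩ := hfind FS k hFS0 (fun h y => hFSmono h y) (hFStop x)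
    obtain ⟨j₀, hj₀, hGj, hGj1⟩ := hfind GS l hGS0 (fun h y => hGSmono h y) (hGStop x)
    have hmem : x ∈ Ω i₀ j₀ := by
      show max (FS i₀ x) (GS j₀ x) < min (FS (i₀ + 1) x) (GS (j₀ + 1) x)
      rw [hFi1, hGj1, min_self]
      exact max_lt hFi hGj
    refine Set.mem_iUnion.2 ⟨⟨i₀ + j₀, by omega⟩, ?_⟩
    exact Set.mem_iUnion.2 ⟨⟨(i₀, j₀), hi₀, hj₀, rfl⟩, hmem⟩
  · -- homotopies
    intro m a a'
    apply homotopic_restrict_iUnion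
    · rintro ⟨⟨i, j⟩, hi, hj, hm⟩
      exact hΩo i j
    · -- disjointness
      have key : ∀ (i j i' j' : ℕ), i < i' → j' < j → Disjoint (Ω i j) (Ω i' j') := by
        intro i j i' j' hii hjj
        rw [Set.disjoint_left]
        intro x hx hx'
        have h1 : GS j x < FS (i + 1) x :=
          lt_of_le_of_lt (le_max_right _ _) (lt_of_lt_of_le hx (min_le_left _ _))
        have h2 : FS i' x < GS (j' + 1) x :=
          lt_of_le_of_lt (le_max_left _ _) (lt_of_lt_of_le hx' (min_le_right _ _))
        have h3 : FS (i + 1) x ≤ FS i' x := hFSmono hii x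
        have h4 : GS (j' + 1) x ≤ GS j x := hGSmono hjj x
        linarith
      rintro ⟨⟨i, j⟩, hi, hj, hm⟩ ⟨⟨i', j'⟩, hi', hj', hm'⟩ hne
      rcases Nat.lt_trichotomy i i' with h | h | h
      · exact key i j i' j' h (by omega)
      · exfalso
        apply hne
        apply Subtype.ext
        have hjj : j = j' := by omega
        simp only [Prod.mk.injEq]
        exact ⟨h, hjj⟩
      · exact (key i' j' i j h (by omega)).symm
    · rintro ⟨⟨i, j⟩, hi, hj, hm⟩
      exact piece_homotopic a a' (hUh ⟨i, by omega⟩ a a') (hVh ⟨j, by omega⟩ a a')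
        (fun x hx => hΩsub₁ i j (by omega) x hx) (fun x hx => hΩsub₂ i j (by omega) x hx)

/-- Product inequality: `TCₙ(X₁ × X₂) ≤ TCₙ(X₁) + TCₙ(X₂)` for path-connected
spaces with `X₁ⁿ × X₂ⁿ` normal. -/
theorem TC_prod_le {X₁ X₂ : Type*} [TopologicalSpace X₁] [TopologicalSpace X₂]
    [PathConnectedSpace X₁] [PathConnectedSpace X₂] (n : ℕ)
    [NormalSpace ((Fin n → X₁) × (Fin n → X₂))] :
    tcomplexity n (X₁ × X₂) ≤ tcomplexity n X₁ + tcomplexity n X₂ := by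
  rcases eq_or_ne (tcomplexity n X₁) ⊤ with h1 | h1
  · rw [h1, top_add]
    exact le_top
  rcases eq_or_ne (tcomplexity n X₂) ⊤ with h2 | h2
  · rw [h2, add_top]
    exact le_top
  obtain ⟨k, hk0⟩ := WithTop.ne_top_iff_exists.1 h1
  obtain ⟨l, hl0⟩ := WithTop.ne_top_iff_exists.1 h2
  have hk : ((k : ℕ) : ℕ∞) = tcomplexity n X₁ := by exact_mod_cast hk0
  have hl : ((l : ℕ) : ℕ∞) = tcomplexity n X₂ := by exact_mod_cast hl0
  have hck : HasCover (prMap X₁ n) k := (homDist_le_iff _ _).1 hk.ge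
  have hcl : HasCover (prMap X₂ n) l := (homDist_le_iff _ _).1 hl.ge
  haveI : NormalSpace (Fin n → X₁ × X₂) :=
    (splitHomeo X₁ X₂ n).symm.normalSpace
  have h := hasCover_prod hck hcl
  calc tcomplexity n (X₁ × X₂) ≤ ((k + l : ℕ) : ℕ∞) := (homDist_le_iff _ _).2 h
    _ = (k : ℕ∞) + (l : ℕ∞) := by push_cast ; rfl
    _ = tcomplexity n X₁ + tcomplexity n X₂ := by rw [hk, hl]
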